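/- Splitting lemma for tours: let γ be a closed tour through s of length |γ| in a simple polygon, and suppose every point of γ is at geodesic distance at most r from s. Divide γ into k consecutive subpaths of equal length |γ|/k with breakpoints a_1 = s, a_2, …, a_k, a_{k+1} = s, and set γ'_i = π(s,a_i) ∪ γ_{a_i a_{i+1}} ∪ π(a_{i+1}, s). Then each γ'_i is a closed tour through s of length at most |γ|/k + 2r, and the union of the γ'_i contains γ (hence their collective visibility region contains that of γ). -/

import Mathlib

/-- Splitting lemma for tours: a closed tour `γ` through `s` of length `ℓ`, arc-length
parameterized on `[0, ℓ]`, all of whose points are at geodesic distance at most `r` from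
`s`, splits into `k` subpaths of equal length `ℓ/k`; joining the breakpoints to `s` by
geodesics yields `k` closed tours through `s`, each of length at most `ℓ/k + 2r`, whose
union covers `γ`. -/
theorem stmt9 (s : ℝ × ℝ) (gd : ℝ × ℝ → ℝ × ℝ → ℝ)
    (k : ℕ) (hk : 0 < k) (γ : ℝ → ℝ × ℝ) (ℓ r : ℝ) (hℓ : 0 ≤ ℓ) (hr : 0 ≤ r)
    (hstart : γ 0 = s) (hend : γ ℓ = s)
    (hgd : ∀ t ∈ Set.Icc (0:ℝ) ℓ, gd s (γ t) ≤ r)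
    (hsymm : ∀ x y, gd x y = gd y x) :
    (∀ i : Fin k,
        gd s (γ (((i : ℕ) : ℝ) * (ℓ / k))) + ℓ / k +
          gd (γ ((((i : ℕ) : ℝ) + 1) * (ℓ / k))) s ≤ ℓ / k + 2 * r) ∧
      (⋃ i : Fin k, γ '' Set.Icc (((i : ℕ) : ℝ) * (ℓ / k)) ((((i : ℕ) : ℝ) + 1) * (ℓ / k)))
        = γ '' Set.Icc 0 ℓ := by
  have hkR : (0:ℝ) < (k:ℝ) := by exact_mod_cast hk
  set c : ℝ := ℓ / k with hc
  have hc0 : 0 ≤ c := div_nonneg hℓ hkR.le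
  have hkc : (k:ℝ) * c = ℓ := by rw [hc]; field_simp [hkR.ne']
  have hmem : ∀ i : Fin k, (((i:ℕ):ℝ) * c) ∈ Set.Icc (0:ℝ) ℓ ∧
      ((((i:ℕ):ℝ) + 1) * c) ∈ Set.Icc (0:ℝ) ℓ := by
    intro i
    have h1 : ((i:ℕ):ℝ) + 1 ≤ (k:ℝ) := by exact_mod_cast Nat.succ_le_of_lt i.2
    have h0 : (0:ℝ) ≤ ((i:ℕ):ℝ) := Nat.cast_nonneg _
    constructor
    · exact ⟨mul_nonneg h0 hc0, by
        calc ((i:ℕ):ℝ) * c ≤ (k:ℝ) * c :=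
              mul_le_mul_of_nonneg_right (by linarith) hc0
          _ = ℓ := hkc⟩
    · exact ⟨mul_nonneg (by linarith) hc0, by
        calc (((i:ℕ):ℝ) + 1) * c ≤ (k:ℝ) * c :=
              mul_le_mul_of_nonneg_right h1 hc0
          _ = ℓ := hkc⟩
  constructor
  · intro i
    have h1 := hgd _ (hmem i).1
    have h2 := hgd _ (hmem i).2
    rw [hsymm] at h2
    linarith
  · rw [← Set.image_iUnion]
    have hIcc : (⋃ i : Fin k, Set.Icc (((i:ℕ):ℝ) * c) ((((i:ℕ):ℝ) + 1) * c))
        = Set.Icc 0 ℓ := by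
      ext t
      simp only [Set.mem_iUnion, Set.mem_Icc]
      constructor
      · rintro ⟨i, h1, h2⟩
        exact ⟨le_trans (hmem i).1.1 h1, le_trans h2 (hmem i).2.2⟩
      · rintro ⟨h0, hl⟩
        rcases eq_or_lt_of_le hc0 with hc' | hc'
        · have hl0 : ℓ = 0 := by rw [← hkc, ← hc']; ring
          refine ⟨⟨0, hk⟩, ?_, ?_⟩ <;> simp [← hc'] <;> linarith [hl.trans_eq hl0]
        · set n : ℕ := ⌊t / c⌋₊ with hn
          have htc : 0 ≤ t / c := div_nonneg h0 hc0
          have hfl : (n : ℝ) ≤ t / c := Nat.floor_le htc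
          have hfu : t / c < (n : ℝ) + 1 := Nat.lt_floor_add_one _
          by_cases hbig : k - 1 ≤ n
          · refine ⟨⟨k - 1, Nat.sub_lt hk one_pos⟩, ?_, ?_⟩
            · have h1 : ((k - 1 : ℕ) : ℝ) ≤ (n : ℝ) := by exact_mod_cast hbig
              calc ((k - 1 : ℕ) : ℝ) * c ≤ (t / c) * c :=
                    mul_le_mul_of_nonneg_right (h1.trans hfl) hc0
                _ = t := div_mul_cancel₀ t hc'.ne'
            · have hc1 : ((k - 1 : ℕ) : ℝ) + 1 = (k : ℝ) := by
                have h : (k - 1 : ℕ) + 1 = k := Nat.succ_pred_eq_of_pos hk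
                exact_mod_cast congrArg (Nat.cast : ℕ → ℝ) h
              show t ≤ (((k - 1 : ℕ) : ℝ) + 1) * c
              rw [hc1, hkc]; exact hl
          · push_neg at hbig
            refine ⟨⟨n, lt_of_lt_of_le hbig (Nat.sub_le k 1)⟩, ?_, ?_⟩
            · calc (n : ℝ) * c ≤ (t / c) * c :=
                    mul_le_mul_of_nonneg_right hfl hc0
                _ = t := div_mul_cancel₀ t hc'.ne'
            · calc t = (t / c) * c := (div_mul_cancel₀ t hc'.ne').symm
                _ ≤ ((n : ℝ) + 1) * c := mul_le_mul_of_nonneg_right hfu.le hc0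
    rw [hIcc]
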